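/- Let f, g : ℝ → ℝ be non-decreasing piecewise-constant (step) functions, and suppose there exist positive reals l and C such that f(x+l) = f(x) + C and g(x+l) = g(x) + C for all x ∈ ℝ, and that f(x) ∈ [0,C) and g(x) ∈ [0,C) for all x ∈ [0,l). Then there exists a constant α ∈ ℝ such that |f(x) - g(x) - α| < C/2 for all x ∈ ℝ. -/

import Mathlib

/-- If `f, g : ℝ → ℝ` are monotone step functions with
`f(x + l) = f(x) + C`, `g(x + l) = g(x) + C` and taking values in `[0, C)` on `[0, l)`,
then there is a constant `α` with `|f(x) - g(x) - α| < C/2` for all `x`. -/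
theorem stmt4 (f g : ℝ → ℝ) (l C : ℝ) (hl : 0 < l) (hC : 0 < C)
    (hfmono : Monotone f) (hgmono : Monotone g)
    (hfusc : UpperSemicontinuous f) (hgusc : UpperSemicontinuous g)
    (hffin : (f '' Set.Ico 0 l).Finite) (hgfin : (g '' Set.Ico 0 l).Finite)
    (hfper : ∀ x, f (x + l) = f x + C) (hgper : ∀ x, g (x + l) = g x + C)
    (hfrange : ∀ x ∈ Set.Ico (0 : ℝ) l, f x ∈ Set.Ico 0 C)
    (hgrange : ∀ x ∈ Set.Ico (0 : ℝ) l, g x ∈ Set.Ico 0 C) :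
    ∃ α : ℝ, ∀ x, |f x - g x - α| < C / 2 := by
  set h : ℝ → ℝ := fun x => f x - g x with hh
  have hper : Function.Periodic h l := by
    intro x
    simp only [hh, hfper, hgper]
    ring
  -- key estimate on [0, l)
  have key : ∀ x ∈ Set.Ico (0:ℝ) l, ∀ y ∈ Set.Ico (0:ℝ) l, h x - h y < C := by
    intro x hx y hy
    obtain ⟨hfx0, hfxC⟩ := hfrange x hx
    obtain ⟨hfy0, hfyC⟩ := hfrange y hy
    obtain ⟨hgx0, hgxC⟩ := hgrange x hx
    obtain ⟨hgy0, hgyC⟩ := hgrange y hy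
    rcases le_total x y with hxy | hxy
    · have := hfmono hxy
      simp only [hh]
      linarith
    · have := hgmono hxy
      simp only [hh]
      linarith
  -- h image on [0,l) is finite and nonempty
  have hsub : h '' Set.Ico 0 l ⊆ Set.image2 (· - ·) (f '' Set.Ico 0 l) (g '' Set.Ico 0 l) := by
    rintro _ ⟨x, hx, rfl⟩
    exact ⟨f x, Set.mem_image_of_mem f hx, g x, Set.mem_image_of_mem g hx, rfl⟩
  have hfin : (h '' Set.Ico 0 l).Finite := (Set.Finite.image2 _ hffin hgfin).subset hsub
  have hne : (h '' Set.Ico 0 l).Nonempty :=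
    ⟨h 0, Set.mem_image_of_mem h ⟨le_refl 0, hl⟩⟩
  obtain ⟨M, hM, hMmax⟩ := hfin.exists_maximalFor id _ hne
  obtain ⟨m, hm, hmmin⟩ := hfin.exists_minimalFor id _ hne
  have hmax : ∀ z ∈ h '' Set.Ico 0 l, z ≤ M := by
    intro z hz
    by_contra hzc
    push_neg at hzc
    simp only [id] at hMmax
    exact absurd (hMmax hz hzc.le) (not_le.mpr hzc)
  have hmin : ∀ z ∈ h '' Set.Ico 0 l, m ≤ z := by
    intro z hz
    by_contra hzc
    push_neg at hzc
    simp only [id] at hmmin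
    exact absurd (hmmin hz hzc.le) (not_le.mpr hzc)
  obtain ⟨x₀, hx₀, hx₀M⟩ := hM
  obtain ⟨y₀, hy₀, hy₀m⟩ := hm
  have hMm : M - m < C := by
    rw [← hx₀M, ← hy₀m]; exact key x₀ hx₀ y₀ hy₀
  refine ⟨(M + m) / 2, fun x => ?_⟩
  obtain ⟨y, hy, hxy⟩ := hper.exists_mem_Ico₀ hl x
  have h1 : h y ≤ M := hmax _ (Set.mem_image_of_mem h hy)
  have h2 : m ≤ h y := hmin _ (Set.mem_image_of_mem h hy)
  have : h x = h y := hxy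
  rw [abs_lt]
  constructor <;> simp only [hh] at this h1 h2 ⊢ <;> linarith
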